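/- In the setting of the warped product (M_1×M_2, g^f, Π^μ), the sectional contravariant curvature 𝒦 of (g^f,Π^μ) satisfies, for 1-forms α_i,β_i on M_i: (1) 𝒦(α_1^h,β_1^h) = 𝒦_1(α_1,β_1)^h; (2) 𝒦(α_1^h,β_2^v) = (g_1²(dμ,α_1)/(4f²‖α_1‖_1²))^h (‖J_2β_2‖_2²/‖β_2‖_2²)^v + (g_1²(J_1df,α_1)/(4f²‖α_1‖_1²) + g_1(𝒟^1_{α_1}(J_1df),α_1)/(2f‖α_1‖_1²))^h; (3) 𝒦(α_2^v,β_2^v) = (μ²/f)^h 𝒦_2(α_2,β_2)^v − (‖dμ‖_1²/4f²)^h (3Π_2²(α_2,β_2)/(‖α_2‖_2²‖β_2‖_2² − g_2²(α_2,β_2)))^v − (‖J_1df‖_1²/4f²)^h + (g_1(dμ,J_1df)/2f²)^h (Π_2(α_2,β_2)g_2(α_2,β_2)/(‖α_2‖_2²‖β_2‖_2² − g_2²(α_2,β_2)))^v, where 𝒦_1, 𝒦_2 are the sectional contravariant curvatures of (g_1,Π_1), (g_2,Π_2). -/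

import Mathlib

namespace WarpedPoissonStmt


/-! ### An algebraic model of contravariant Poisson calculus

`R` plays the role of the algebra of smooth functions `C^∞(M)`, `Ω` plays the
role of the `R`-module of differential 1-forms `Γ(T^*M)`, `d : R →+ Ω` is the
differential (an additive map satisfying the Leibniz rule), and a bivector
field is an alternating `R`-bilinear form `P : Ω →ₗ[R] Ω →ₗ[R] R`. -/

variable {R : Type*} [CommRing R] {Ω : Type*} [AddCommGroup Ω] [Module R Ω]

/-- The action `♯_P(α)(φ) = P(α, dφ)` of the anchor map of the bivector field
`P` on functions. -/
def anchorFun (P : Ω →ₗ[R] Ω →ₗ[R] R) (d : R →+ Ω) (α : Ω) (φ : R) : R :=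
  P α (d φ)

/-- The Leibniz rule for the differential `d`. -/
def IsDifferential (d : R →+ Ω) : Prop :=
  ∀ φ ψ : R, d (φ * ψ) = φ • d ψ + ψ • d φ

/-- A bivector field is alternating. -/
def IsBivector (P : Ω →ₗ[R] Ω →ₗ[R] R) : Prop :=
  ∀ α : Ω, P α α = 0

/-- A cometric is symmetric. -/
def IsCometric (g : Ω →ₗ[R] Ω →ₗ[R] R) : Prop :=
  ∀ α β : Ω, g α β = g β α

/-- `μ` is a Casimir function of `P`: its Hamiltonian vector field `♯_P(dμ)`
vanishes, i.e. `P(dμ, β) = 0` for every 1-form `β`. -/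
def IsCasimir (P : Ω →ₗ[R] Ω →ₗ[R] R) (d : R →+ Ω) (μ : R) : Prop :=
  ∀ β : Ω, P (d μ) β = 0

/-- Axioms of a contravariant connection `D` with respect to the bivector
field `P` : `ℝ`-bilinear (here: additive), `C^∞(M)`-linear in the first
argument and a derivation in the second one. -/
structure IsContravariantConnection (P : Ω →ₗ[R] Ω →ₗ[R] R) (d : R →+ Ω)
    (D : Ω → Ω → Ω) : Prop where
  add_left : ∀ α β γ : Ω, D (α + β) γ = D α γ + D β γ
  smul_left : ∀ (φ : R) (α β : Ω), D (φ • α) β = φ • D α β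
  add_right : ∀ α β γ : Ω, D α (β + γ) = D α β + D α γ
  smul_right : ∀ (φ : R) (α β : Ω), D α (φ • β) = φ • D α β + anchorFun P d α φ • β

/-- Axioms characterizing the Koszul bracket
`[α,β]_P = L_{♯_P(α)}β − L_{♯_P(β)}α − d(P(α,β))` of 1-forms. -/
structure IsKoszulBracket (P : Ω →ₗ[R] Ω →ₗ[R] R) (d : R →+ Ω)
    (K : Ω → Ω → Ω) : Prop where
  skew : ∀ α β : Ω, K α β = -K β α
  add_left : ∀ α β γ : Ω, K (α + β) γ = K α γ + K β γ
  exact_exact : ∀ φ ψ : R, K (d φ) (d ψ) = d (P (d φ) (d ψ))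
  leibniz : ∀ (α β : Ω) (φ : R), K α (φ • β) = φ • K α β + anchorFun P d α φ • β

/-- The Levi-Civita contravariant connection associated with the pair
`(g, P)`: the unique torsion-free contravariant connection for which the
cometric `g` is parallel. -/
structure IsLeviCivita (g P : Ω →ₗ[R] Ω →ₗ[R] R) (d : R →+ Ω)
    (K D : Ω → Ω → Ω) : Prop where
  conn : IsContravariantConnection P d D
  koszul : IsKoszulBracket P d K
  torsion_free : ∀ α β : Ω, D α β - D β α = K α β
  metric : ∀ α β γ : Ω, anchorFun P d α (g β γ) = g (D α β) γ + g β (D α γ)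

/-- `P` is a Poisson tensor: the bracket `{φ,ψ} = P(dφ,dψ)` on functions
satisfies the Jacobi identity (equivalently `[P,P]_S = 0`). -/
def IsPoisson (P : Ω →ₗ[R] Ω →ₗ[R] R) (d : R →+ Ω) : Prop :=
  ∀ φ ψ χ : R,
    P (d (P (d φ) (d ψ))) (d χ) + P (d (P (d ψ) (d χ))) (d φ) +
      P (d (P (d χ) (d φ))) (d ψ) = 0

/-- The torsion of a contravariant connection `D` (with Koszul bracket `K`). -/
def torsion (D K : Ω → Ω → Ω) (α β : Ω) : Ω := D α β - D β α - K α β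

/-- The curvature `ℛ(α,β)γ = D_α D_β γ − D_β D_α γ − D_{[α,β]} γ` of a
contravariant connection `D` (with Koszul bracket `K`). -/
def curv (D K : Ω → Ω → Ω) (α β γ : Ω) : Ω :=
  D α (D β γ) - D β (D α γ) - D (K α β) γ

/-- The contravariant derivative `(D_α Q)(β,γ)` of a bivector field `Q`,
with respect to a contravariant connection `D` anchored by `P`. -/
def covBivector (P Q : Ω →ₗ[R] Ω →ₗ[R] R) (d : R →+ Ω) (D : Ω → Ω → Ω)
    (α β γ : Ω) : R :=
  anchorFun P d α (Q β γ) - Q (D α β) γ - Q β (D α γ)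

/-! ### Horizontal and vertical lifts to a product manifold

`(R₁, Ω₁)` and `(R₂, Ω₂)` model the functions and 1-forms of the factors
`M₁`, `M₂`, and `(R, Ω)` those of the product `M₁ × M₂`.  The lifts
`φ₁ʰ = φ₁ ∘ σ₁`, `φ₂ᵛ = φ₂ ∘ σ₂`, `α₁ʰ = σ₁^*α₁`, `α₂ᵛ = σ₂^*α₂` are encoded
by the ring homomorphisms `hF`, `vF` and the additive maps `hΩ`, `vΩ`. -/

/-- The horizontal/vertical lifts of functions and 1-forms to the product. -/
structure ProductLift
    (R₁ : Type*) [CommRing R₁] (Ω₁ : Type*) [AddCommGroup Ω₁] [Module R₁ Ω₁]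
    (R₂ : Type*) [CommRing R₂] (Ω₂ : Type*) [AddCommGroup Ω₂] [Module R₂ Ω₂]
    (R : Type*) [CommRing R] (Ω : Type*) [AddCommGroup Ω] [Module R Ω]
    (d₁ : R₁ →+ Ω₁) (d₂ : R₂ →+ Ω₂) (d : R →+ Ω) where
  hF : R₁ →+* R
  vF : R₂ →+* R
  hΩ : Ω₁ →+ Ω
  vΩ : Ω₂ →+ Ω
  hΩ_smul : ∀ (φ : R₁) (α : Ω₁), hΩ (φ • α) = hF φ • hΩ α
  vΩ_smul : ∀ (φ : R₂) (α : Ω₂), vΩ (φ • α) = vF φ • vΩ α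
  d_hF : ∀ φ : R₁, d (hF φ) = hΩ (d₁ φ)
  d_vF : ∀ φ : R₂, d (vF φ) = vΩ (d₂ φ)
  span_lifts : ∀ ω : Ω, ω ∈ Submodule.span R (Set.range ⇑hΩ ∪ Set.range ⇑vΩ)

/-- `Pm` is the warped bivector field `Π^μ = Π₁ʰ + μʰ Π₂ᵛ` on the product,
relative to the bivector fields `P₁`, `P₂` and the warping function `μ`.
It is the unique bivector field with these values on lifted 1-forms. -/
structure IsWarpedBivector
    {R₁ : Type*} [CommRing R₁] {Ω₁ : Type*} [AddCommGroup Ω₁] [Module R₁ Ω₁]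
    {R₂ : Type*} [CommRing R₂] {Ω₂ : Type*} [AddCommGroup Ω₂] [Module R₂ Ω₂]
    {R : Type*} [CommRing R] {Ω : Type*} [AddCommGroup Ω] [Module R Ω]
    {d₁ : R₁ →+ Ω₁} {d₂ : R₂ →+ Ω₂} {d : R →+ Ω}
    (L : ProductLift R₁ Ω₁ R₂ Ω₂ R Ω d₁ d₂ d)
    (P₁ : Ω₁ →ₗ[R₁] Ω₁ →ₗ[R₁] R₁) (P₂ : Ω₂ →ₗ[R₂] Ω₂ →ₗ[R₂] R₂)
    (μ : R₁) (Pm : Ω →ₗ[R] Ω →ₗ[R] R) : Prop where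
  hh : ∀ α β : Ω₁, Pm (L.hΩ α) (L.hΩ β) = L.hF (P₁ α β)
  vv : ∀ α β : Ω₂, Pm (L.vΩ α) (L.vΩ β) = L.hF μ * L.vF (P₂ α β)
  hv : ∀ (α : Ω₁) (β : Ω₂), Pm (L.hΩ α) (L.vΩ β) = 0

/-- `gf` is the contravariant warped metric `g^f = g₁ʰ + fʰ g₂ᵛ` on the
product, relative to the cometrics `g₁`, `g₂` and the warping function `f`. -/
structure IsWarpedCometric
    {R₁ : Type*} [CommRing R₁] {Ω₁ : Type*} [AddCommGroup Ω₁] [Module R₁ Ω₁]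
    {R₂ : Type*} [CommRing R₂] {Ω₂ : Type*} [AddCommGroup Ω₂] [Module R₂ Ω₂]
    {R : Type*} [CommRing R] {Ω : Type*} [AddCommGroup Ω] [Module R Ω]
    {d₁ : R₁ →+ Ω₁} {d₂ : R₂ →+ Ω₂} {d : R →+ Ω}
    (L : ProductLift R₁ Ω₁ R₂ Ω₂ R Ω d₁ d₂ d)
    (g₁ : Ω₁ →ₗ[R₁] Ω₁ →ₗ[R₁] R₁) (g₂ : Ω₂ →ₗ[R₂] Ω₂ →ₗ[R₂] R₂)
    (f : R₁) (gf : Ω →ₗ[R] Ω →ₗ[R] R) : Prop where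
  hh : ∀ α β : Ω₁, gf (L.hΩ α) (L.hΩ β) = L.hF (g₁ α β)
  vv : ∀ α β : Ω₂, gf (L.vΩ α) (L.vΩ β) = L.hF f * L.vF (g₂ α β)
  hv : ∀ (α : Ω₁) (β : Ω₂), gf (L.hΩ α) (L.vΩ β) = 0


section GenericAux

variable {R : Type*} [CommRing R] {Ω : Type*} [AddCommGroup Ω] [Module R Ω]

lemma d_one (d : R →+ Ω) (hd : IsDifferential d) : d 1 = 0 := by
  have h := hd 1 1
  simp only [mul_one, one_smul] at h
  exact left_eq_add.mp h

lemma d_two (d : R →+ Ω) (hd : IsDifferential d) : d 2 = 0 := by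
  have : (2 : R) = 1 + 1 := by norm_num
  rw [this, map_add, d_one d hd, add_zero]

lemma anchor_zero (P : Ω →ₗ[R] Ω →ₗ[R] R) (d : R →+ Ω) (α : Ω) :
    anchorFun P d α 0 = 0 := by
  simp [anchorFun]

lemma anchor_two_mul (P : Ω →ₗ[R] Ω →ₗ[R] R) (d : R →+ Ω) (hd : IsDifferential d)
    (α : Ω) (φ : R) : anchorFun P d α (2 * φ) = 2 * anchorFun P d α φ := by
  unfold anchorFun
  rw [hd, map_add, map_smul, map_smul, smul_eq_mul, smul_eq_mul]
  rw [show P α (d 2) = 0 by rw [d_two d hd]; simp]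
  ring

lemma anchor_mul (P : Ω →ₗ[R] Ω →ₗ[R] R) (d : R →+ Ω) (hd : IsDifferential d)
    (α : Ω) (φ ψ : R) :
    anchorFun P d α (φ * ψ) = φ * anchorFun P d α ψ + ψ * anchorFun P d α φ := by
  unfold anchorFun
  rw [hd, map_add, map_smul, map_smul, smul_eq_mul, smul_eq_mul]

lemma bivector_skew {P : Ω →ₗ[R] Ω →ₗ[R] R} (hP : IsBivector P) (x y : Ω) :
    P x y = - P y x := by
  have h := hP (x + y)
  simp only [map_add, LinearMap.add_apply, hP x, hP y] at h
  linear_combination h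

lemma K_zero_right {P : Ω →ₗ[R] Ω →ₗ[R] R} {d : R →+ Ω} {K : Ω → Ω → Ω}
    (hK : IsKoszulBracket P d K) (α : Ω) : K α 0 = 0 := by
  have h := hK.leibniz α 0 (0 : R)
  simpa [anchor_zero] using h

lemma K_zero_left {P : Ω →ₗ[R] Ω →ₗ[R] R} {d : R →+ Ω} {K : Ω → Ω → Ω}
    (hK : IsKoszulBracket P d K) (α : Ω) : K 0 α = 0 := by
  rw [hK.skew, K_zero_right hK, neg_zero]

lemma K_add_right {P : Ω →ₗ[R] Ω →ₗ[R] R} {d : R →+ Ω} {K : Ω → Ω → Ω}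
    (hK : IsKoszulBracket P d K) (α β γ : Ω) : K α (β + γ) = K α β + K α γ := by
  rw [hK.skew, hK.add_left, hK.skew β, hK.skew γ]
  abel

lemma K_smul_left {P : Ω →ₗ[R] Ω →ₗ[R] R} {d : R →+ Ω} {K : Ω → Ω → Ω}
    (hK : IsKoszulBracket P d K) (φ : R) (α β : Ω) :
    K (φ • α) β = φ • K α β - anchorFun P d β φ • α := by
  rw [hK.skew, hK.leibniz, hK.skew β α]
  module

lemma D_zero_left {P : Ω →ₗ[R] Ω →ₗ[R] R} {d : R →+ Ω} {D : Ω → Ω → Ω}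
    (hD : IsContravariantConnection P d D) (β : Ω) : D 0 β = 0 := by
  have h := hD.add_left 0 0 β
  rw [add_zero] at h
  exact (left_eq_add.mp h)

lemma koszul_formula {g P : Ω →ₗ[R] Ω →ₗ[R] R} {d : R →+ Ω} {K D : Ω → Ω → Ω}
    (hg : IsCometric g) (hLC : IsLeviCivita g P d K D) (α β γ : Ω) :
    2 * g (D α β) γ =
      anchorFun P d α (g β γ) + anchorFun P d β (g α γ) - anchorFun P d γ (g α β)
      + g (K α β) γ - g (K α γ) β - g (K β γ) α := by
  have E1 := hLC.metric α β γ
  have E2 := hLC.metric β α γ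
  have E3 := hLC.metric γ α β
  have T1 := hLC.torsion_free α β
  have T2 := hLC.torsion_free α γ
  have T3 := hLC.torsion_free β γ
  have hβα : D β α = D α β - K α β := by rw [← T1]; abel
  have hγα : D γ α = D α γ - K α γ := by rw [← T2]; abel
  have hγβ : D γ β = D β γ - K β γ := by rw [← T3]; abel
  rw [hβα] at E2
  rw [hγα, hγβ] at E3
  have s1 : g (D α β - K α β) γ = g (D α β) γ - g (K α β) γ := by
    rw [map_sub, LinearMap.sub_apply]
  have s2 : g (D α γ - K α γ) β = g (D α γ) β - g (K α γ) β := by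
    rw [map_sub, LinearMap.sub_apply]
  have s3 : g α (D β γ - K β γ) = g α (D β γ) - g α (K β γ) := by
    rw [map_sub]
  rw [s1] at E2
  rw [s2, s3] at E3
  linear_combination -E1 - E2 + E3 - hg β (D α γ) - hg α (K β γ)

end GenericAux

section RingAux

variable {R : Type*} [CommRing R] [Algebra ℝ R]

lemma two_unit_R : (2 : R) * algebraMap ℝ R 2⁻¹ = 1 := by
  rw [show ((2:R)) = algebraMap ℝ R 2 from (map_ofNat (algebraMap ℝ R) 2).symm, ← map_mul]
  norm_num

lemma four_unit_R : (4 : R) * algebraMap ℝ R 4⁻¹ = 1 := by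
  rw [show ((4:R)) = algebraMap ℝ R 4 from (map_ofNat (algebraMap ℝ R) 4).symm, ← map_mul]
  norm_num

lemma two_cancel {x y : R} (h : 2 * x = 2 * y) : x = y := by
  have h2 := two_unit_R (R := R)
  calc x = ((2:R) * algebraMap ℝ R 2⁻¹) * x := by rw [h2, one_mul]
  _ = algebraMap ℝ R 2⁻¹ * (2 * x) := by ring
  _ = algebraMap ℝ R 2⁻¹ * (2 * y) := by rw [h]
  _ = ((2:R) * algebraMap ℝ R 2⁻¹) * y := by ring
  _ = y := by rw [h2, one_mul]

lemma four_cancel {x y : R} (h : 4 * x = 4 * y) : x = y := by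
  have h2 := four_unit_R (R := R)
  calc x = ((4:R) * algebraMap ℝ R 4⁻¹) * x := by rw [h2, one_mul]
  _ = algebraMap ℝ R 4⁻¹ * (4 * x) := by ring
  _ = algebraMap ℝ R 4⁻¹ * (4 * y) := by rw [h]
  _ = ((4:R) * algebraMap ℝ R 4⁻¹) * y := by ring
  _ = y := by rw [h2, one_mul]

end RingAux

section ProductAux

variable {R₁ : Type*} [CommRing R₁]
  {Ω₁ : Type*} [AddCommGroup Ω₁] [Module R₁ Ω₁]
  {R₂ : Type*} [CommRing R₂]
  {Ω₂ : Type*} [AddCommGroup Ω₂] [Module R₂ Ω₂]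
  {R : Type*} [CommRing R]
  {Ω : Type*} [AddCommGroup Ω] [Module R Ω]
  {d₁ : R₁ →+ Ω₁} {d₂ : R₂ →+ Ω₂} {d : R →+ Ω}
  {g₁ : Ω₁ →ₗ[R₁] Ω₁ →ₗ[R₁] R₁} {g₂ : Ω₂ →ₗ[R₂] Ω₂ →ₗ[R₂] R₂}
  {P₁ : Ω₁ →ₗ[R₁] Ω₁ →ₗ[R₁] R₁} {P₂ : Ω₂ →ₗ[R₂] Ω₂ →ₗ[R₂] R₂}
  {f finv μ : R₁}
  {gf Pm : Ω →ₗ[R] Ω →ₗ[R] R}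
  {K₁ D₁ : Ω₁ → Ω₁ → Ω₁} {K₂ D₂ : Ω₂ → Ω₂ → Ω₂} {K Dm : Ω → Ω → Ω}
  {J₁ : Ω₁ →ₗ[R₁] Ω₁} {J₂ : Ω₂ →ₗ[R₂] Ω₂}

lemma anch_h_hF (L : ProductLift R₁ Ω₁ R₂ Ω₂ R Ω d₁ d₂ d)
    (hPm : IsWarpedBivector L P₁ P₂ μ Pm) (α : Ω₁) (φ : R₁) :
    anchorFun Pm d (L.hΩ α) (L.hF φ) = L.hF (P₁ α (d₁ φ)) := by
  unfold anchorFun; rw [L.d_hF, hPm.hh]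

lemma anch_h_vF (L : ProductLift R₁ Ω₁ R₂ Ω₂ R Ω d₁ d₂ d)
    (hPm : IsWarpedBivector L P₁ P₂ μ Pm) (α : Ω₁) (φ : R₂) :
    anchorFun Pm d (L.hΩ α) (L.vF φ) = 0 := by
  unfold anchorFun; rw [L.d_vF, hPm.hv]

lemma anch_v_hF (L : ProductLift R₁ Ω₁ R₂ Ω₂ R Ω d₁ d₂ d)
    (hPmb : IsBivector Pm) (hPm : IsWarpedBivector L P₁ P₂ μ Pm) (α : Ω₂) (φ : R₁) :
    anchorFun Pm d (L.vΩ α) (L.hF φ) = 0 := by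
  unfold anchorFun
  rw [L.d_hF, bivector_skew hPmb, hPm.hv, neg_zero]

lemma anch_v_vF (L : ProductLift R₁ Ω₁ R₂ Ω₂ R Ω d₁ d₂ d)
    (hPm : IsWarpedBivector L P₁ P₂ μ Pm) (α : Ω₂) (φ : R₂) :
    anchorFun Pm d (L.vΩ α) (L.vF φ) = L.hF μ * L.vF (P₂ α (d₂ φ)) := by
  unfold anchorFun; rw [L.d_vF, hPm.vv]

lemma anch_neg (P : Ω →ₗ[R] Ω →ₗ[R] R) (α : Ω) (φ : R) :
    anchorFun P d α (-φ) = - anchorFun P d α φ := by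
  unfold anchorFun; rw [map_neg, map_neg]

lemma pair_ext (L : ProductLift R₁ Ω₁ R₂ Ω₂ R Ω d₁ d₂ d) (x y : Ω)
    (hh : ∀ γ, gf x (L.hΩ γ) = gf y (L.hΩ γ))
    (hv : ∀ γ, gf x (L.vΩ γ) = gf y (L.vΩ γ)) (z : Ω) : gf x z = gf y z := by
  have hz := L.span_lifts z
  induction hz using Submodule.span_induction with
  | mem w hw =>
      rcases hw with ⟨γ, rfl⟩ | ⟨γ, rfl⟩
      · exact hh γ
      · exact hv γ
  | zero => simp
  | add a b _ _ iha ihb => rw [map_add, map_add, iha, ihb]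
  | smul c a _ ih => rw [map_smul, map_smul, ih]

lemma K_h_v (L : ProductLift R₁ Ω₁ R₂ Ω₂ R Ω d₁ d₂ d)
    (hspan₁ : Submodule.span R₁ (Set.range ⇑d₁) = ⊤)
    (hspan₂ : Submodule.span R₂ (Set.range ⇑d₂) = ⊤)
    (hPmb : IsBivector Pm) (hPm : IsWarpedBivector L P₁ P₂ μ Pm)
    (hK : IsKoszulBracket Pm d K) :
    ∀ (α : Ω₁) (β : Ω₂), K (L.hΩ α) (L.vΩ β) = 0 := by
  intro α β
  have hα : α ∈ Submodule.span R₁ (Set.range ⇑d₁) := by rw [hspan₁]; trivial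
  induction hα using Submodule.span_induction with
  | mem x hx =>
      obtain ⟨φ, rfl⟩ := hx
      have hβ : β ∈ Submodule.span R₂ (Set.range ⇑d₂) := by rw [hspan₂]; trivial
      induction hβ using Submodule.span_induction with
      | mem y hy =>
          obtain ⟨ψ, rfl⟩ := hy
          rw [← L.d_hF, ← L.d_vF, hK.exact_exact, L.d_hF, L.d_vF, hPm.hv, map_zero]
      | zero => rw [map_zero]; exact K_zero_right hK _
      | add y z _ _ ihy ihz => rw [map_add, K_add_right hK, ihy, ihz, add_zero]
      | smul c y _ ih =>
          rw [L.vΩ_smul, hK.leibniz, ih, smul_zero, zero_add,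
            anch_h_vF L hPm, zero_smul]
  | zero => rw [map_zero]; exact K_zero_left hK _
  | add x y _ _ ihx ihy => rw [map_add, hK.add_left, ihx, ihy, add_zero]
  | smul c x _ ih =>
      rw [L.hΩ_smul, K_smul_left hK, ih, smul_zero, zero_sub,
        anch_v_hF L hPmb hPm, zero_smul, neg_zero]

lemma K_h_h (L : ProductLift R₁ Ω₁ R₂ Ω₂ R Ω d₁ d₂ d)
    (hspan₁ : Submodule.span R₁ (Set.range ⇑d₁) = ⊤)
    (hPm : IsWarpedBivector L P₁ P₂ μ Pm)
    (hK : IsKoszulBracket Pm d K) (hK₁ : IsKoszulBracket P₁ d₁ K₁) :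
    ∀ (α β : Ω₁), K (L.hΩ α) (L.hΩ β) = L.hΩ (K₁ α β) := by
  intro α β
  have hα : α ∈ Submodule.span R₁ (Set.range ⇑d₁) := by rw [hspan₁]; trivial
  induction hα using Submodule.span_induction with
  | mem x hx =>
      obtain ⟨φ, rfl⟩ := hx
      have hβ : β ∈ Submodule.span R₁ (Set.range ⇑d₁) := by rw [hspan₁]; trivial
      induction hβ using Submodule.span_induction with
      | mem y hy =>
          obtain ⟨ψ, rfl⟩ := hy
          rw [← L.d_hF, ← L.d_hF, hK.exact_exact, L.d_hF, L.d_hF, hPm.hh,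
            L.d_hF, ← hK₁.exact_exact]
      | zero => rw [map_zero, K_zero_right hK, K_zero_right hK₁, map_zero]
      | add y z _ _ ihy ihz =>
          rw [map_add, K_add_right hK, ihy, ihz, K_add_right hK₁, map_add]
      | smul c y _ ih =>
          rw [L.hΩ_smul, hK.leibniz, ih, anch_h_hF L hPm, hK₁.leibniz,
            map_add, L.hΩ_smul, L.hΩ_smul]
          rfl
  | zero => rw [map_zero, K_zero_left hK, K_zero_left hK₁, map_zero]
  | add x y _ _ ihx ihy =>
      rw [map_add, hK.add_left, ihx, ihy, hK₁.add_left, map_add]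
  | smul c x _ ih =>
      rw [L.hΩ_smul, K_smul_left hK, ih, anch_h_hF L hPm, K_smul_left hK₁,
        map_sub, L.hΩ_smul, L.hΩ_smul]
      rfl

lemma K_v_v (L : ProductLift R₁ Ω₁ R₂ Ω₂ R Ω d₁ d₂ d)
    (hd : IsDifferential d)
    (hspan₂ : Submodule.span R₂ (Set.range ⇑d₂) = ⊤)
    (hPm : IsWarpedBivector L P₁ P₂ μ Pm)
    (hK : IsKoszulBracket Pm d K) (hK₂ : IsKoszulBracket P₂ d₂ K₂) :
    ∀ (α β : Ω₂), K (L.vΩ α) (L.vΩ β) =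
      L.hF μ • L.vΩ (K₂ α β) + L.vF (P₂ α β) • L.hΩ (d₁ μ) := by
  intro α β
  have hα : α ∈ Submodule.span R₂ (Set.range ⇑d₂) := by rw [hspan₂]; trivial
  induction hα using Submodule.span_induction with
  | mem x hx =>
      obtain ⟨φ, rfl⟩ := hx
      have hβ : β ∈ Submodule.span R₂ (Set.range ⇑d₂) := by rw [hspan₂]; trivial
      induction hβ using Submodule.span_induction with
      | mem y hy =>
          obtain ⟨ψ, rfl⟩ := hy
          rw [← L.d_vF, ← L.d_vF, hK.exact_exact, L.d_vF, L.d_vF, hPm.vv, hd,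
            L.d_vF, L.d_hF, ← hK₂.exact_exact]
      | zero =>
          rw [map_zero, K_zero_right hK, K_zero_right hK₂, map_zero, map_zero,
            map_zero, smul_zero, zero_smul, add_zero]
      | add y z _ _ ihy ihz =>
          rw [map_add, K_add_right hK, ihy, ihz, K_add_right hK₂, map_add,
            map_add, map_add]
          module
      | smul c y _ ih =>
          rw [L.vΩ_smul, hK.leibniz, ih, anch_v_vF L hPm]
          simp only [anchorFun, hK₂.leibniz, map_add, L.vΩ_smul, map_smul,
            smul_eq_mul, map_mul]
          module
  | zero =>
      rw [map_zero, K_zero_left hK, K_zero_left hK₂, map_zero]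
      simp
  | add x y _ _ ihx ihy =>
      rw [map_add, hK.add_left, ihx, ihy, hK₂.add_left]
      simp only [map_add, LinearMap.add_apply]
      module
  | smul c x _ ih =>
      rw [L.vΩ_smul, K_smul_left hK, ih, anch_v_vF L hPm, K_smul_left hK₂]
      simp only [anchorFun, map_sub, map_smul, L.vΩ_smul, smul_eq_mul, map_mul,
        LinearMap.smul_apply, LinearMap.map_smul₂]
      module

lemma D_congr (hDm : IsLeviCivita gf Pm d K Dm) (θ : Ω) {x x' : Ω}
    (h : ∀ z, gf x z = gf x' z) (z : Ω) : gf (Dm θ x) z = gf (Dm θ x') z := by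
  have m1 := hDm.metric θ x z
  have m2 := hDm.metric θ x' z
  rw [show gf x z = gf x' z from h z, h (Dm θ z)] at m1
  linear_combination m2 - m1

lemma D_congr₂ (hd : IsDifferential d) (hDm : IsLeviCivita gf Pm d K Dm)
    (θ : Ω) {x x₂ : Ω} (h : ∀ z, gf ((2:R) • x) z = gf x₂ z) (z : Ω) :
    2 * gf (Dm θ x) z = gf (Dm θ x₂) z := by
  have h2 : Dm θ ((2:R) • x) = (2:R) • Dm θ x := by
    rw [hDm.conn.smul_right,
      show anchorFun Pm d θ (2:R) = 0 from by
        unfold anchorFun; rw [d_two d hd, map_zero],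
      zero_smul, add_zero]
  have hc := D_congr hDm θ h z
  rw [h2, map_smul, LinearMap.smul_apply, smul_eq_mul] at hc
  exact hc

lemma gf_vh (hgfc : IsCometric gf) (L : ProductLift R₁ Ω₁ R₂ Ω₂ R Ω d₁ d₂ d)
    (hgf : IsWarpedCometric L g₁ g₂ f gf) (β : Ω₂) (α : Ω₁) :
    gf (L.vΩ β) (L.hΩ α) = 0 := by
  rw [hgfc, hgf.hv]

lemma D_h_h [Algebra ℝ R] (L : ProductLift R₁ Ω₁ R₂ Ω₂ R Ω d₁ d₂ d)
    (hgfc : IsCometric gf) (hgf : IsWarpedCometric L g₁ g₂ f gf)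
    (hPm : IsWarpedBivector L P₁ P₂ μ Pm) (hPmb : IsBivector Pm)
    (hg₁ : IsCometric g₁)
    (hDm : IsLeviCivita gf Pm d K Dm) (hD₁ : IsLeviCivita g₁ P₁ d₁ K₁ D₁)
    (hKhh : ∀ a b : Ω₁, K (L.hΩ a) (L.hΩ b) = L.hΩ (K₁ a b))
    (hKhv : ∀ (a : Ω₁) (b : Ω₂), K (L.hΩ a) (L.vΩ b) = 0)
    (α β : Ω₁) (z : Ω) :
    gf (Dm (L.hΩ α) (L.hΩ β)) z = gf (L.hΩ (D₁ α β)) z := by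
  refine pair_ext L _ _ ?_ ?_ z
  · intro γ
    apply two_cancel
    have kos := koszul_formula hgfc hDm (L.hΩ α) (L.hΩ β) (L.hΩ γ)
    have kos₁ := koszul_formula hg₁ hD₁ α β γ
    rw [hgf.hh, hgf.hh, hgf.hh, hKhh, hKhh, hKhh, hgf.hh, hgf.hh, hgf.hh,
      anch_h_hF L hPm, anch_h_hF L hPm, anch_h_hF L hPm] at kos
    rw [kos, hgf.hh,
      show (2:R) * L.hF (g₁ (D₁ α β) γ) = L.hF (2 * g₁ (D₁ α β) γ) from by
        rw [map_mul, map_ofNat],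
      kos₁]
    simp only [anchorFun, map_add, map_sub]
  · intro γ
    apply two_cancel
    have kos := koszul_formula hgfc hDm (L.hΩ α) (L.hΩ β) (L.vΩ γ)
    rw [hgf.hv, hgf.hv, hgf.hh, hKhh, hgf.hv, hKhv, hKhv,
      anch_v_hF L hPmb hPm] at kos
    rw [kos, hgf.hv]
    simp [anchor_zero]

lemma D_h_v [Algebra ℝ R] (L : ProductLift R₁ Ω₁ R₂ Ω₂ R Ω d₁ d₂ d)
    (hd : IsDifferential d)
    (hgfc : IsCometric gf) (hgf : IsWarpedCometric L g₁ g₂ f gf)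
    (hPm : IsWarpedBivector L P₁ P₂ μ Pm) (hPmb : IsBivector Pm)
    (hDm : IsLeviCivita gf Pm d K Dm)
    (hfinv : f * finv = 1)
    (hJ₂ : ∀ a b : Ω₂, g₂ (J₂ a) b = P₂ a b)
    (hKhh : ∀ a b : Ω₁, K (L.hΩ a) (L.hΩ b) = L.hΩ (K₁ a b))
    (hKhv : ∀ (a : Ω₁) (b : Ω₂), K (L.hΩ a) (L.vΩ b) = 0)
    (hKvv : ∀ (a b : Ω₂), K (L.vΩ a) (L.vΩ b) =
      L.hF μ • L.vΩ (K₂ a b) + L.vF (P₂ a b) • L.hΩ (d₁ μ))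
    (α : Ω₁) (β : Ω₂) (z : Ω) :
    gf ((2:R) • Dm (L.hΩ α) (L.vΩ β)) z =
      gf (L.hF (P₁ α (d₁ f) * finv) • L.vΩ β +
        (-(L.hF (g₁ (d₁ μ) α * finv))) • L.vΩ (J₂ β)) z := by
  have hK := hDm.koszul
  refine pair_ext L _ _ ?_ ?_ z
  · intro γ
    rw [map_smul, LinearMap.smul_apply, smul_eq_mul]
    have kos := koszul_formula hgfc hDm (L.hΩ α) (L.vΩ β) (L.hΩ γ)
    rw [gf_vh hgfc L hgf, hgf.hh, hgf.hv, hKhv, hKhh, hK.skew (L.vΩ β) (L.hΩ γ),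
      hKhv, anch_v_hF L hPmb hPm] at kos
    rw [kos]
    simp [anchor_zero, gf_vh hgfc L hgf, hgf.hv]
  · intro γ
    rw [map_smul, LinearMap.smul_apply, smul_eq_mul]
    have kos := koszul_formula hgfc hDm (L.hΩ α) (L.vΩ β) (L.vΩ γ)
    rw [hgf.vv, hgf.hv, hgf.hv, hKhv, hKhv, hKvv,
      anchor_mul Pm d hd, anch_h_vF L hPm, anch_h_hF L hPm] at kos
    rw [kos]
    have hff : L.hF f * L.hF finv = 1 := by rw [← map_mul, hfinv, map_one]
    simp only [anchor_zero, map_add, map_neg, LinearMap.add_apply, map_smul,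
      LinearMap.smul_apply, smul_eq_mul, LinearMap.neg_apply, LinearMap.zero_apply,
      map_zero, hgf.vv, hgf.hh, gf_vh hgfc L hgf, hJ₂, map_mul]
    ring_nf
    linear_combination (L.vF (P₂ β γ) * L.hF (g₁ (d₁ μ) α)
      - L.vF (g₂ β γ) * L.hF (P₁ α (d₁ f))) * hff

lemma D_v_v [Algebra ℝ R] (L : ProductLift R₁ Ω₁ R₂ Ω₂ R Ω d₁ d₂ d)
    (hd : IsDifferential d)
    (hgfc : IsCometric gf) (hgf : IsWarpedCometric L g₁ g₂ f gf)
    (hPm : IsWarpedBivector L P₁ P₂ μ Pm) (hPmb : IsBivector Pm)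
    (hP₁b : IsBivector P₁)
    (hg₂ : IsCometric g₂)
    (hDm : IsLeviCivita gf Pm d K Dm) (hD₂ : IsLeviCivita g₂ P₂ d₂ K₂ D₂)
    (hJ₁ : ∀ a b : Ω₁, g₁ (J₁ a) b = P₁ a b)
    (hKhv : ∀ (a : Ω₁) (b : Ω₂), K (L.hΩ a) (L.vΩ b) = 0)
    (hKvv : ∀ (a b : Ω₂), K (L.vΩ a) (L.vΩ b) =
      L.hF μ • L.vΩ (K₂ a b) + L.vF (P₂ a b) • L.hΩ (d₁ μ))
    (α β : Ω₂) (z : Ω) :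
    gf ((2:R) • Dm (L.vΩ α) (L.vΩ β)) z =
      gf ((2 * L.hF μ) • L.vΩ (D₂ α β) + L.vF (g₂ α β) • L.hΩ (J₁ (d₁ f)) +
        L.vF (P₂ α β) • L.hΩ (d₁ μ)) z := by
  have hK := hDm.koszul
  refine pair_ext L _ _ ?_ ?_ z
  · intro γ
    rw [map_smul, LinearMap.smul_apply, smul_eq_mul]
    have kos := koszul_formula hgfc hDm (L.vΩ α) (L.vΩ β) (L.hΩ γ)
    rw [gf_vh hgfc L hgf, gf_vh hgfc L hgf, hgf.vv, hKvv,
      hK.skew (L.vΩ α) (L.hΩ γ), hKhv, hK.skew (L.vΩ β) (L.hΩ γ), hKhv,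
      anchor_mul Pm d hd, anch_h_vF L hPm, anch_h_hF L hPm] at kos
    simp only [neg_zero, map_zero, LinearMap.zero_apply, sub_zero] at kos
    rw [kos]
    rw [show P₁ γ (d₁ f) = -(g₁ (J₁ (d₁ f)) γ) from by
      rw [bivector_skew hP₁b γ (d₁ f), hJ₁]]
    simp only [anchor_zero, map_add, map_neg, LinearMap.add_apply, map_smul,
      LinearMap.smul_apply, smul_eq_mul, map_zero, LinearMap.zero_apply,
      hgf.hh, gf_vh hgfc L hgf, map_mul]
    ring
  · intro γ
    rw [map_smul, LinearMap.smul_apply, smul_eq_mul]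
    have kos := koszul_formula hgfc hDm (L.vΩ α) (L.vΩ β) (L.vΩ γ)
    rw [hgf.vv, hgf.vv, hgf.vv, hKvv, hKvv, hKvv,
      anchor_mul Pm d hd, anchor_mul Pm d hd, anchor_mul Pm d hd,
      anch_v_hF L hPmb hPm, anch_v_hF L hPmb hPm, anch_v_hF L hPmb hPm,
      anch_v_vF L hPm, anch_v_vF L hPm, anch_v_vF L hPm] at kos
    rw [kos]
    have vkos₂ := congrArg L.vF (koszul_formula hg₂ hD₂ α β γ)
    simp only [map_mul, map_add, map_sub, map_ofNat, anchorFun] at vkos₂ ⊢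
    simp only [LinearMap.add_apply, map_smul, LinearMap.smul_apply, smul_eq_mul,
      map_zero, LinearMap.zero_apply, hgf.vv, hgf.hh, hgf.hv, gf_vh hgfc L hgf,
      map_mul, map_add]
    linear_combination (-(L.hF f * L.hF μ)) * vkos₂

end ProductAux
set_option maxHeartbeats 2000000 in
/-- **Corollary 5.7.** The sectional contravariant curvature
`𝒦` of `(g^f, Π^μ)` in terms of the sectional curvatures `𝒦₁`, `𝒦₂` of
`(g₁,Π₁)`, `(g₂,Π₂)`.  The sectional curvature in the direction of the plane
spanned by `θ, η` is characterized by
`𝒦(θ,η)·(g(θ,θ)g(η,η) − g(θ,η)²) = g(ℛ(θ,η)η, θ)`; all the divisions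
occurring in the formulas are encoded by the hypothesized inverses `nα`,
`nβ`, `w` and `finv`. -/
theorem warped_sectional_curvature
    {R₁ : Type*} [CommRing R₁] [Algebra ℝ R₁]
    {Ω₁ : Type*} [AddCommGroup Ω₁] [Module R₁ Ω₁]
    {R₂ : Type*} [CommRing R₂] [Algebra ℝ R₂]
    {Ω₂ : Type*} [AddCommGroup Ω₂] [Module R₂ Ω₂]
    {R : Type*} [CommRing R] [Algebra ℝ R]
    {Ω : Type*} [AddCommGroup Ω] [Module R Ω]
    (d₁ : R₁ →+ Ω₁) (d₂ : R₂ →+ Ω₂) (d : R →+ Ω)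
    (hd₁ : IsDifferential d₁) (hd₂ : IsDifferential d₂) (hd : IsDifferential d)
    (hspan₁ : Submodule.span R₁ (Set.range ⇑d₁) = ⊤)
    (hspan₂ : Submodule.span R₂ (Set.range ⇑d₂) = ⊤)
    (hspan : Submodule.span R (Set.range ⇑d) = ⊤)
    (L : ProductLift R₁ Ω₁ R₂ Ω₂ R Ω d₁ d₂ d)
    -- the cometrics and the bivector fields on the factors:
    (g₁ : Ω₁ →ₗ[R₁] Ω₁ →ₗ[R₁] R₁) (hg₁ : IsCometric g₁)
    (g₂ : Ω₂ →ₗ[R₂] Ω₂ →ₗ[R₂] R₂) (hg₂ : IsCometric g₂)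
    (P₁ : Ω₁ →ₗ[R₁] Ω₁ →ₗ[R₁] R₁) (hP₁b : IsBivector P₁)
    (P₂ : Ω₂ →ₗ[R₂] Ω₂ →ₗ[R₂] R₂) (hP₂b : IsBivector P₂)
    -- the warping functions: `f > 0` (hence invertible), `μ`:
    (f finv : R₁) (hfinv : f * finv = 1) (μ : R₁)
    -- the contravariant warped metric and the warped bivector field:
    (gf : Ω →ₗ[R] Ω →ₗ[R] R) (hgfc : IsCometric gf)
    (hgf : IsWarpedCometric L g₁ g₂ f gf)
    (Pm : Ω →ₗ[R] Ω →ₗ[R] R) (hPmb : IsBivector Pm)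
    (hPm : IsWarpedBivector L P₁ P₂ μ Pm)
    -- the Koszul brackets and the Levi-Civita contravariant connections:
    (K₁ : Ω₁ → Ω₁ → Ω₁) (K₂ : Ω₂ → Ω₂ → Ω₂) (K : Ω → Ω → Ω)
    (D₁ : Ω₁ → Ω₁ → Ω₁) (hD₁ : IsLeviCivita g₁ P₁ d₁ K₁ D₁)
    (D₂ : Ω₂ → Ω₂ → Ω₂) (hD₂ : IsLeviCivita g₂ P₂ d₂ K₂ D₂)
    (Dm : Ω → Ω → Ω) (hDm : IsLeviCivita gf Pm d K Dm)
    -- the fields of homomorphisms `J₁`, `J₂`: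
    (J₁ : Ω₁ →ₗ[R₁] Ω₁) (hJ₁ : ∀ α β : Ω₁, g₁ (J₁ α) β = P₁ α β)
    (J₂ : Ω₂ →ₗ[R₂] Ω₂) (hJ₂ : ∀ α β : Ω₂, g₂ (J₂ α) β = P₂ α β)
    -- the sectional contravariant curvatures:
    (SK : Ω → Ω → R)
    (hSK : ∀ θ η : Ω,
      SK θ η * (gf θ θ * gf η η - gf θ η * gf θ η) = gf (curv Dm K θ η η) θ)
    (SK₁ : Ω₁ → Ω₁ → R₁)
    (hSK₁ : ∀ θ η : Ω₁,
      SK₁ θ η * (g₁ θ θ * g₁ η η - g₁ θ η * g₁ θ η) =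
        g₁ (curv D₁ K₁ θ η η) θ)
    (SK₂ : Ω₂ → Ω₂ → R₂)
    (hSK₂ : ∀ θ η : Ω₂,
      SK₂ θ η * (g₂ θ θ * g₂ η η - g₂ θ η * g₂ θ η) =
        g₂ (curv D₂ K₂ θ η η) θ) :
    let Jdf := J₁ (d₁ f)
    -- 1.
    (∀ α₁ β₁ : Ω₁,
      IsUnit (g₁ α₁ α₁ * g₁ β₁ β₁ - g₁ α₁ β₁ * g₁ α₁ β₁) →
      SK (L.hΩ α₁) (L.hΩ β₁) = L.hF (SK₁ α₁ β₁)) ∧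
    -- 2.
    (∀ (α₁ : Ω₁) (β₂ : Ω₂) (nα : R₁) (nβ : R₂),
      g₁ α₁ α₁ * nα = 1 → g₂ β₂ β₂ * nβ = 1 →
      SK (L.hΩ α₁) (L.vΩ β₂) =
        algebraMap ℝ R 4⁻¹ *
            L.hF (g₁ (d₁ μ) α₁ * g₁ (d₁ μ) α₁ * finv * finv * nα) *
            L.vF (g₂ (J₂ β₂) (J₂ β₂) * nβ) +
          L.hF (algebraMap ℝ R₁ 4⁻¹ *
              (g₁ Jdf α₁ * g₁ Jdf α₁) * finv * finv * nα +
            algebraMap ℝ R₁ 2⁻¹ * finv * g₁ (D₁ α₁ Jdf) α₁ * nα)) ∧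
    -- 3.
    (∀ (α₂ β₂ : Ω₂) (w : R₂),
      (g₂ α₂ α₂ * g₂ β₂ β₂ - g₂ α₂ β₂ * g₂ α₂ β₂) * w = 1 →
      SK (L.vΩ α₂) (L.vΩ β₂) =
        L.hF (μ * μ * finv) * L.vF (SK₂ α₂ β₂) -
          algebraMap ℝ R 4⁻¹ * L.hF (finv * finv * g₁ (d₁ μ) (d₁ μ)) *
            L.vF (3 * (P₂ α₂ β₂ * P₂ α₂ β₂) * w) -
          algebraMap ℝ R 4⁻¹ * L.hF (finv * finv * g₁ Jdf Jdf) +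
          algebraMap ℝ R 2⁻¹ * L.hF (finv * finv * g₁ (d₁ μ) Jdf) *
            L.vF (P₂ α₂ β₂ * g₂ α₂ β₂ * w)) := by
  intro Jdf
  have hKhh := K_h_h L hspan₁ hPm hDm.koszul hD₁.koszul
  have hKhv := K_h_v L hspan₁ hspan₂ hPmb hPm hDm.koszul
  have hKvv := K_v_v L hd hspan₂ hPm hDm.koszul hD₂.koszul
  have hDhh : ∀ (a b : Ω₁) (z : Ω),
      gf (Dm (L.hΩ a) (L.hΩ b)) z = gf (L.hΩ (D₁ a b)) z :=
    fun a b z => D_h_h L hgfc hgf hPm hPmb hg₁ hDm hD₁ hKhh hKhv a b z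
  have hDhv : ∀ (a : Ω₁) (b : Ω₂) (z : Ω),
      gf ((2:R) • Dm (L.hΩ a) (L.vΩ b)) z =
      gf (L.hF (P₁ a (d₁ f) * finv) • L.vΩ b +
        (-(L.hF (g₁ (d₁ μ) a * finv))) • L.vΩ (J₂ b)) z :=
    fun a b z => D_h_v L hd hgfc hgf hPm hPmb hDm hfinv hJ₂ hKhh hKhv hKvv a b z
  have hDvv : ∀ (a b : Ω₂) (z : Ω),
      gf ((2:R) • Dm (L.vΩ a) (L.vΩ b)) z =
      gf ((2 * L.hF μ) • L.vΩ (D₂ a b) + L.vF (g₂ a b) • L.hΩ (J₁ (d₁ f)) +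
        L.vF (P₂ a b) • L.hΩ (d₁ μ)) z :=
    fun a b z => D_v_v L hd hgfc hgf hPm hPmb hP₁b hg₂ hDm hD₂ hJ₁ hKhv hKvv a b z
  have hDvh : ∀ (b : Ω₂) (a : Ω₁), Dm (L.vΩ b) (L.hΩ a) = Dm (L.hΩ a) (L.vΩ b) := by
    intro b a
    have ht := hDm.torsion_free (L.hΩ a) (L.vΩ b)
    rw [hKhv] at ht
    exact (sub_eq_zero.mp ht).symm
  refine ⟨?_, ?_, ?_⟩
  · -- Case 1
    intro α β hQ
    have e1 : ∀ z, gf (Dm (L.hΩ α) (Dm (L.hΩ β) (L.hΩ β))) z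
        = gf (L.hΩ (D₁ α (D₁ β β))) z := by
      intro z
      calc gf (Dm (L.hΩ α) (Dm (L.hΩ β) (L.hΩ β))) z
          = gf (Dm (L.hΩ α) (L.hΩ (D₁ β β))) z := D_congr hDm _ (hDhh β β) z
        _ = gf (L.hΩ (D₁ α (D₁ β β))) z := hDhh α _ z
    have e2 : ∀ z, gf (Dm (L.hΩ β) (Dm (L.hΩ α) (L.hΩ β))) z
        = gf (L.hΩ (D₁ β (D₁ α β))) z := by
      intro z
      calc gf (Dm (L.hΩ β) (Dm (L.hΩ α) (L.hΩ β))) z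
          = gf (Dm (L.hΩ β) (L.hΩ (D₁ α β))) z := D_congr hDm _ (hDhh α β) z
        _ = gf (L.hΩ (D₁ β (D₁ α β))) z := hDhh β _ z
    have hcurv : gf (curv Dm K (L.hΩ α) (L.hΩ β) (L.hΩ β)) (L.hΩ α)
        = L.hF (g₁ (curv D₁ K₁ α β β) α) := by
      unfold curv
      simp only [map_sub, LinearMap.sub_apply]
      rw [e1 (L.hΩ α), e2 (L.hΩ α), hKhh, hDhh (K₁ α β) β (L.hΩ α),
        hgf.hh, hgf.hh, hgf.hh]
    have hs := hSK (L.hΩ α) (L.hΩ β)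
    rw [hgf.hh, hgf.hh, hgf.hh, hcurv, ← hSK₁ α β] at hs
    have hQu : IsUnit (L.hF (g₁ α α) * L.hF (g₁ β β) - L.hF (g₁ α β) * L.hF (g₁ α β)) := by
      have h' := hQ.map L.hF
      rw [map_sub, map_mul, map_mul] at h'
      exact h'
    refine IsUnit.mul_right_cancel hQu ?_
    rw [hs, map_mul, map_sub, map_mul, map_mul]
  · -- Case 2
    intro α β nα nβ hnα hnβ
    rw [show Jdf = J₁ (d₁ f) from rfl]
    have hPαf : P₁ α (d₁ f) = -(g₁ (J₁ (d₁ f)) α) := by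
      rw [bivector_skew hP₁b, hJ₁]
    have hgβJ : g₂ β (J₂ β) = 0 := by rw [hg₂, hJ₂, hP₂b]
    have hPβJ : P₂ β (J₂ β) = g₂ (J₂ β) (J₂ β) := (hJ₂ β (J₂ β)).symm
    have hvert0 : ∀ x : Ω₂, gf (Dm (L.hΩ α) (L.vΩ x)) (L.hΩ α) = 0 := by
      intro x
      apply two_cancel
      have h := hDhv α x (L.hΩ α)
      rw [map_smul, LinearMap.smul_apply, smul_eq_mul] at h
      rw [h]
      simp [gf_vh hgfc L hgf]
    have c1 := D_congr₂ hd hDm (L.hΩ α) (hDvv β β) (L.hΩ α)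
    rw [hP₂b, map_zero, zero_smul, add_zero] at c1
    have f2 : gf (Dm (L.hΩ α) ((2 * L.hF μ) • L.vΩ (D₂ β β) +
          L.vF (g₂ β β) • L.hΩ (J₁ (d₁ f)))) (L.hΩ α)
        = L.vF (g₂ β β) * L.hF (g₁ (D₁ α (J₁ (d₁ f))) α) := by
      rw [hDm.conn.add_right, hDm.conn.smul_right, hDm.conn.smul_right]
      simp only [map_add, LinearMap.add_apply, map_smul, LinearMap.smul_apply,
        smul_eq_mul]
      rw [hvert0 (D₂ β β), hDhh α (J₁ (d₁ f)) (L.hΩ α), hgf.hh,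
        anch_h_vF L hPm, gf_vh hgfc L hgf]
      ring
    have c2 := D_congr₂ hd hDm (L.vΩ β) (hDhv α β) (L.hΩ α)
    have fv2 : ∀ x : Ω₂, 2 * gf (Dm (L.vΩ β) (L.vΩ x)) (L.hΩ α)
        = L.vF (g₂ β x) * L.hF (g₁ (J₁ (d₁ f)) α)
          + L.vF (P₂ β x) * L.hF (g₁ (d₁ μ) α) := by
      intro x
      have h := hDvv β x (L.hΩ α)
      rw [map_smul, LinearMap.smul_apply, smul_eq_mul] at h
      rw [h]
      simp only [map_add, LinearMap.add_apply, map_smul, LinearMap.smul_apply,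
        smul_eq_mul, gf_vh hgfc L hgf, hgf.hh]
      ring
    have fvβ := fv2 β
    rw [hP₂b, map_zero, zero_mul, add_zero] at fvβ
    have fvJ := fv2 (J₂ β)
    rw [hgβJ, hPβJ, map_zero, zero_mul, zero_add] at fvJ
    have f4 : 2 * gf (Dm (L.vΩ β) (L.hF (P₁ α (d₁ f) * finv) • L.vΩ β +
          (-(L.hF (g₁ (d₁ μ) α * finv))) • L.vΩ (J₂ β))) (L.hΩ α)
        = L.hF (P₁ α (d₁ f) * finv) * (L.vF (g₂ β β) * L.hF (g₁ (J₁ (d₁ f)) α))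
          + (-(L.hF (g₁ (d₁ μ) α * finv))) *
            (L.vF (g₂ (J₂ β) (J₂ β)) * L.hF (g₁ (d₁ μ) α)) := by
      rw [hDm.conn.add_right, hDm.conn.smul_right, hDm.conn.smul_right]
      simp only [map_add, LinearMap.add_apply, map_smul, LinearMap.smul_apply,
        smul_eq_mul, gf_vh hgfc L hgf, mul_zero, add_zero]
      linear_combination (L.hF (P₁ α (d₁ f) * finv)) * fvβ
        + (-(L.hF (g₁ (d₁ μ) α * finv))) * fvJ
    have hs := hSK (L.hΩ α) (L.vΩ β)
    have hcurv : gf (curv Dm K (L.hΩ α) (L.vΩ β) (L.vΩ β)) (L.hΩ α)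
        = gf (Dm (L.hΩ α) (Dm (L.vΩ β) (L.vΩ β))) (L.hΩ α)
          - gf (Dm (L.vΩ β) (Dm (L.hΩ α) (L.vΩ β))) (L.hΩ α) := by
      unfold curv
      rw [hKhv α β, D_zero_left hDm.conn]
      simp only [map_sub, LinearMap.sub_apply, map_zero, LinearMap.zero_apply,
        sub_zero]
    rw [hcurv, hgf.hh, hgf.vv, hgf.hv] at hs
    have rA : L.hF (g₁ α α) * L.hF nα = 1 := by rw [← map_mul, hnα, map_one]
    have rB : L.vF (g₂ β β) * L.vF nβ = 1 := by rw [← map_mul, hnβ, map_one]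
    have rF : L.hF f * L.hF finv = 1 := by rw [← map_mul, hfinv, map_one]
    have r4 : (4:R) * algebraMap ℝ R 4⁻¹ = 1 := four_unit_R
    have r41 : (4:R) * L.hF (algebraMap ℝ R₁ 4⁻¹) = 1 := by
      rw [show (4:R) = L.hF 4 from (map_ofNat L.hF 4).symm, ← map_mul,
        four_unit_R, map_one]
    have r21 : (2:R) * L.hF (algebraMap ℝ R₁ 2⁻¹) = 1 := by
      rw [show (2:R) = L.hF 2 from (map_ofNat L.hF 2).symm, ← map_mul,
        two_unit_R, map_one]
    have hQu : IsUnit (L.hF (g₁ α α) * (L.hF f * L.vF (g₂ β β))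
        - (0:R) * (0:R)) := by
      refine IsUnit.of_mul_eq_one (L.hF nα * (L.hF finv * L.vF nβ)) ?_
      linear_combination (L.hF f * L.hF finv * (L.vF (g₂ β β) * L.vF nβ)) * rA
        + (L.vF (g₂ β β) * L.vF nβ) * rF + rB
    refine IsUnit.mul_right_cancel hQu ?_
    apply four_cancel
    rw [hs]
    rw [hPαf] at c2 f4
    simp only [map_mul, map_add, map_neg] at c2 f4 ⊢
    linear_combination 2*c1 + 2*f2 - 2*c2 - f4
      - (L.hF (g₁ (d₁ μ) α) * L.hF (g₁ (d₁ μ) α) * L.hF finv * L.hF finv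
          * L.hF nα * L.vF (g₂ (J₂ β) (J₂ β)) * L.vF nβ * L.hF (g₁ α α)
          * L.hF f * L.vF (g₂ β β)) * r4
      - (L.hF (g₁ (d₁ μ) α) * L.hF (g₁ (d₁ μ) α) * L.hF finv * L.hF finv
          * L.vF (g₂ (J₂ β) (J₂ β)) * L.vF nβ * L.hF f * L.vF (g₂ β β)
        + L.hF (g₁ (J₁ (d₁ f)) α) * L.hF (g₁ (J₁ (d₁ f)) α) * L.hF finv
          * L.hF finv * L.hF f * L.vF (g₂ β β)
        + 2 * L.hF finv * L.hF (g₁ (D₁ α (J₁ (d₁ f))) α) * L.hF f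
          * L.vF (g₂ β β)) * rA
      - (L.hF (g₁ (d₁ μ) α) * L.hF (g₁ (d₁ μ) α) * L.hF finv * L.hF finv
          * L.vF (g₂ (J₂ β) (J₂ β)) * L.hF f) * rB
      - (L.hF (g₁ (d₁ μ) α) * L.hF (g₁ (d₁ μ) α) * L.hF finv
          * L.vF (g₂ (J₂ β) (J₂ β))
        + L.hF (g₁ (J₁ (d₁ f)) α) * L.hF (g₁ (J₁ (d₁ f)) α) * L.hF finv
          * L.vF (g₂ β β)
        + 2 * L.hF (g₁ (D₁ α (J₁ (d₁ f))) α) * L.vF (g₂ β β)) * rF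
      - (L.hF (g₁ (J₁ (d₁ f)) α) * L.hF (g₁ (J₁ (d₁ f)) α) * L.hF finv
          * L.hF finv * L.hF nα * L.hF (g₁ α α) * L.hF f * L.vF (g₂ β β)) * r41
      - (2 * L.hF finv * L.hF (g₁ (D₁ α (J₁ (d₁ f))) α) * L.hF nα
          * L.hF (g₁ α α) * L.hF f * L.vF (g₂ β β)) * r21
  · -- Case 3
    intro α β w hw
    rw [show Jdf = J₁ (d₁ f) from rfl]
    have hPμf : P₁ (d₁ μ) (d₁ f) = -(g₁ (d₁ μ) (J₁ (d₁ f))) := by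
      rw [bivector_skew hP₁b, hg₁ (d₁ μ) (J₁ (d₁ f)), hJ₁]
    have hPJf : P₁ (J₁ (d₁ f)) (d₁ f) = -(g₁ (J₁ (d₁ f)) (J₁ (d₁ f))) := by
      rw [bivector_skew hP₁b, hJ₁]
    have hgJα : g₂ (J₂ α) α = 0 := by rw [hJ₂, hP₂b]
    have hgJβα : g₂ (J₂ β) α = -(P₂ α β) := by rw [hJ₂, bivector_skew hP₂b]
    have hv2 : ∀ x y : Ω₂, 2 * gf (Dm (L.vΩ x) (L.vΩ y)) (L.vΩ α)
        = 2 * L.hF μ * (L.hF f * L.vF (g₂ (D₂ x y) α)) := by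
      intro x y
      have h := hDvv x y (L.vΩ α)
      rw [map_smul, LinearMap.smul_apply, smul_eq_mul] at h
      rw [h]
      simp only [map_add, LinearMap.add_apply, map_smul, LinearMap.smul_apply,
        smul_eq_mul, hgf.vv, hgf.hv, gf_vh hgfc L hgf, mul_zero, add_zero]
    have hh2 : ∀ (x : Ω₁) (y : Ω₂), 2 * gf (Dm (L.vΩ y) (L.hΩ x)) (L.vΩ α)
        = L.hF (P₁ x (d₁ f) * finv) * (L.hF f * L.vF (g₂ y α))
          - L.hF (g₁ (d₁ μ) x * finv) * (L.hF f * L.vF (g₂ (J₂ y) α)) := by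
      intro x y
      rw [hDvh y x]
      have h := hDhv x y (L.vΩ α)
      rw [map_smul, LinearMap.smul_apply, smul_eq_mul] at h
      rw [h]
      simp only [map_add, LinearMap.add_apply, map_smul, LinearMap.smul_apply,
        smul_eq_mul, hgf.vv, map_neg, LinearMap.neg_apply, neg_mul]
      ring
    have hh2Jα := hh2 (J₁ (d₁ f)) α
    rw [hPJf, hgJα, map_zero, mul_zero, mul_zero, sub_zero] at hh2Jα
    have hh2Jβ := hh2 (J₁ (d₁ f)) β
    rw [hPJf, hgJβα, hg₂ β α, map_neg] at hh2Jβ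
    have hh2mβ := hh2 (d₁ μ) β
    rw [hPμf, hgJβα, hg₂ β α, map_neg] at hh2mβ
    -- F1
    have c1 := D_congr₂ hd hDm (L.vΩ α) (hDvv β β) (L.vΩ α)
    rw [hP₂b, map_zero, zero_smul, add_zero] at c1
    have F1 : 4 * gf (Dm (L.vΩ α) (Dm (L.vΩ β) (L.vΩ β))) (L.vΩ α)
        = 2 * L.hF μ * (2 * L.hF μ * (L.hF f * L.vF (g₂ (D₂ α (D₂ β β)) α)))
          + L.vF (g₂ β β) * (L.hF (-(g₁ (J₁ (d₁ f)) (J₁ (d₁ f))) * finv)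
            * (L.hF f * L.vF (g₂ α α))) := by
      rw [show (4:R) * gf (Dm (L.vΩ α) (Dm (L.vΩ β) (L.vΩ β))) (L.vΩ α)
          = 2 * (2 * gf (Dm (L.vΩ α) (Dm (L.vΩ β) (L.vΩ β))) (L.vΩ α)) from by ring,
        c1, hDm.conn.add_right, hDm.conn.smul_right, hDm.conn.smul_right]
      simp only [map_add, LinearMap.add_apply, map_smul, LinearMap.smul_apply,
        smul_eq_mul, hgf.hv]
      rw [anchor_two_mul Pm d hd, anch_v_hF L hPmb hPm]
      linear_combination (2 * L.hF μ) * hv2 α (D₂ β β)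
        + L.vF (g₂ β β) * hh2Jα
    -- F2
    have c2 := D_congr₂ hd hDm (L.vΩ β) (hDvv α β) (L.vΩ α)
    have F2 : 4 * gf (Dm (L.vΩ β) (Dm (L.vΩ α) (L.vΩ β))) (L.vΩ α)
        = 2 * L.hF μ * (2 * L.hF μ * (L.hF f * L.vF (g₂ (D₂ β (D₂ α β)) α)))
          + L.vF (g₂ α β) * (L.hF (-(g₁ (J₁ (d₁ f)) (J₁ (d₁ f))) * finv)
              * (L.hF f * L.vF (g₂ α β))
            - L.hF (g₁ (d₁ μ) (J₁ (d₁ f)) * finv)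
              * (L.hF f * (-(L.vF (P₂ α β)))))
          + L.vF (P₂ α β) * (L.hF (-(g₁ (d₁ μ) (J₁ (d₁ f))) * finv)
              * (L.hF f * L.vF (g₂ α β))
            - L.hF (g₁ (d₁ μ) (d₁ μ) * finv)
              * (L.hF f * (-(L.vF (P₂ α β))))) := by
      rw [show (4:R) * gf (Dm (L.vΩ β) (Dm (L.vΩ α) (L.vΩ β))) (L.vΩ α)
          = 2 * (2 * gf (Dm (L.vΩ β) (Dm (L.vΩ α) (L.vΩ β))) (L.vΩ α)) from by ring,
        c2, hDm.conn.add_right, hDm.conn.add_right, hDm.conn.smul_right,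
        hDm.conn.smul_right, hDm.conn.smul_right]
      simp only [map_add, LinearMap.add_apply, map_smul, LinearMap.smul_apply,
        smul_eq_mul, hgf.hv]
      rw [anchor_two_mul Pm d hd, anch_v_hF L hPmb hPm]
      linear_combination (2 * L.hF μ) * hv2 β (D₂ α β)
        + L.vF (g₂ α β) * hh2Jβ + L.vF (P₂ α β) * hh2mβ
    -- F3
    have F3 : 4 * gf (Dm (K (L.vΩ α) (L.vΩ β)) (L.vΩ β)) (L.vΩ α)
        = 2 * L.hF μ * (2 * L.hF μ * (L.hF f * L.vF (g₂ (D₂ (K₂ α β) β) α)))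
          + 2 * L.vF (P₂ α β) * (L.hF (-(g₁ (d₁ μ) (J₁ (d₁ f))) * finv)
              * (L.hF f * L.vF (g₂ α β))
            - L.hF (g₁ (d₁ μ) (d₁ μ) * finv)
              * (L.hF f * (-(L.vF (P₂ α β))))) := by
      rw [hKvv α β, hDm.conn.add_left, hDm.conn.smul_left, hDm.conn.smul_left,
        ← hDvh β (d₁ μ)]
      simp only [map_add, LinearMap.add_apply, map_smul, LinearMap.smul_apply,
        smul_eq_mul]
      linear_combination (2 * L.hF μ) * hv2 (K₂ α β) β
        + 2 * (L.vF (P₂ α β)) * hh2mβ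
    -- sectional curvature equation
    have hs := hSK (L.vΩ α) (L.vΩ β)
    have hcurv : gf (curv Dm K (L.vΩ α) (L.vΩ β) (L.vΩ β)) (L.vΩ α)
        = gf (Dm (L.vΩ α) (Dm (L.vΩ β) (L.vΩ β))) (L.vΩ α)
          - gf (Dm (L.vΩ β) (Dm (L.vΩ α) (L.vΩ β))) (L.vΩ α)
          - gf (Dm (K (L.vΩ α) (L.vΩ β)) (L.vΩ β)) (L.vΩ α) := by
      unfold curv
      simp only [map_sub, LinearMap.sub_apply]
    rw [hcurv, hgf.vv, hgf.vv, hgf.vv] at hs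
    -- curvature of factor 2
    have hr := hSK₂ α β
    unfold curv at hr
    simp only [map_sub, LinearMap.sub_apply] at hr
    have rC := congrArg L.vF hr
    simp only [map_mul, map_sub] at rC
    -- relations
    have rF : L.hF f * L.hF finv = 1 := by rw [← map_mul, hfinv, map_one]
    have rW : (L.vF (g₂ α α) * L.vF (g₂ β β) - L.vF (g₂ α β) * L.vF (g₂ α β))
        * L.vF w = 1 := by
      have h := congrArg L.vF hw
      rw [map_mul, map_sub, map_mul, map_mul, map_one] at h
      exact h
    have r4 : (4:R) * algebraMap ℝ R 4⁻¹ = 1 := four_unit_R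
    have r2 : (2:R) * algebraMap ℝ R 2⁻¹ = 1 := two_unit_R
    have hQu : IsUnit (L.hF f * L.vF (g₂ α α) * (L.hF f * L.vF (g₂ β β))
        - L.hF f * L.vF (g₂ α β) * (L.hF f * L.vF (g₂ α β))) := by
      refine IsUnit.of_mul_eq_one (L.hF finv * L.hF finv * L.vF w) ?_
      linear_combination (L.hF f * L.hF finv * L.hF f * L.hF finv) * rW
        + (L.hF f * L.hF finv + 1) * rF
    refine IsUnit.mul_right_cancel hQu ?_
    apply four_cancel
    rw [hs]
    simp only [map_mul, map_add, map_neg, neg_mul, mul_neg, map_ofNat] at F1 F2 F3 ⊢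
    linear_combination F1 - F2 - F3
      - (4 * L.hF μ * L.hF μ * L.hF f) * rC
      - (4 * L.hF μ * L.hF μ * L.vF (SK₂ α β) * L.hF f
          * (L.vF (g₂ α α) * L.vF (g₂ β β) - L.vF (g₂ α β) * L.vF (g₂ α β))
        - 3 * L.hF finv * L.hF (g₁ (d₁ μ) (d₁ μ)) * L.vF (P₂ α β)
          * L.vF (P₂ α β) * L.hF f
        - L.hF finv * L.hF (g₁ (J₁ (d₁ f)) (J₁ (d₁ f))) * L.hF f
          * (L.vF (g₂ α α) * L.vF (g₂ β β) - L.vF (g₂ α β) * L.vF (g₂ α β))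
        + 2 * L.hF finv * L.hF (g₁ (d₁ μ) (J₁ (d₁ f))) * L.vF (P₂ α β)
          * L.vF (g₂ α β) * L.hF f) * rF
      - (-3 * L.hF finv * L.hF finv * L.hF (g₁ (d₁ μ) (d₁ μ)) * L.vF (P₂ α β)
          * L.vF (P₂ α β) * L.vF w * L.hF f * L.hF f
          * (L.vF (g₂ α α) * L.vF (g₂ β β) - L.vF (g₂ α β) * L.vF (g₂ α β))
        - L.hF finv * L.hF finv * L.hF (g₁ (J₁ (d₁ f)) (J₁ (d₁ f)))
          * L.hF f * L.hF f
          * (L.vF (g₂ α α) * L.vF (g₂ β β) - L.vF (g₂ α β) * L.vF (g₂ α β))) * r4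
      - (-3 * L.hF finv * L.hF finv * L.hF (g₁ (d₁ μ) (d₁ μ)) * L.vF (P₂ α β)
          * L.vF (P₂ α β) * L.hF f * L.hF f
        + 2 * L.hF finv * L.hF finv * L.hF (g₁ (d₁ μ) (J₁ (d₁ f)))
          * L.vF (P₂ α β) * L.vF (g₂ α β) * L.hF f * L.hF f) * rW
      - (2 * L.hF finv * L.hF finv * L.hF (g₁ (d₁ μ) (J₁ (d₁ f)))
          * L.vF (P₂ α β) * L.vF (g₂ α β) * L.vF w * L.hF f * L.hF f
          * (L.vF (g₂ α α) * L.vF (g₂ β β) - L.vF (g₂ α β) * L.vF (g₂ α β))) * r2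

end WarpedPoissonStmt
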